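/- Define polynomials 𝔭_n(x) by 𝔭_0 = 1, 𝔭_1 = x, and 𝔭_{n+1} = x·𝔭_n + q^{2-2n}[n][n-2]·𝔭_{n-1}. Then for n ≥ 2, (x-1) divides 𝔭_n(x) in ℚ(q)[x], and moreover 𝔭_n(x)/(x-1) has all coefficients in ℕ[q^{-1}]. -/

import Mathlib

open Finset Polynomial

noncomputable def q : RatFunc ℚ := RatFunc.X

noncomputable def qa (n : ℤ) : RatFunc ℚ := (q ^ n - q ^ (-n)) / (q - q⁻¹)

noncomputable def qfac (n : ℕ) : RatFunc ℚ := ∏ k ∈ Finset.range n, qa ((k : ℤ) + 1)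

noncomputable def qbin (a : ℤ) (n : ℕ) : RatFunc ℚ :=
  ∏ k ∈ Finset.range n, qa (a - (k : ℤ)) / qa ((k : ℤ) + 1)

noncomputable def qa2 (n : ℤ) : RatFunc ℚ :=
  (q ^ (2 * n) - q ^ (-(2 * n))) / (q ^ (2 : ℤ) - q ^ (-2 : ℤ))

noncomputable def qbin2 (a : ℤ) (n : ℕ) : RatFunc ℚ :=
  ∏ k ∈ Finset.range n, qa2 (a - (k : ℤ)) / qa2 ((k : ℤ) + 1)

noncomputable def LaurentZ : Subring (RatFunc ℚ) := Subring.closure {q, q⁻¹}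

noncomputable def NatLaurent : Subsemiring (RatFunc ℚ) := Subsemiring.closure {q⁻¹}

lemma hq0 : q ≠ 0 := RatFunc.X_ne_zero

lemma hq : q - q⁻¹ ≠ 0 := by
  intro h
  have h2 : q * q - 1 = 0 := by
    have := congrArg (· * q) h
    simp only [sub_mul, inv_mul_cancel₀ hq0, zero_mul] at this
    linear_combination this
  rw [show q = algebraMap (Polynomial ℚ) (RatFunc ℚ) Polynomial.X from (RatFunc.algebraMap_X).symm,
    ← map_mul, ← map_one (algebraMap (Polynomial ℚ) (RatFunc ℚ)), ← map_sub,
    map_eq_zero_iff _ (RatFunc.algebraMap_injective ℚ)] at h2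
  have := congrArg (fun f => Polynomial.coeff f 2) h2
  simp [Polynomial.coeff_one, ← Polynomial.X_pow_eq_monomial, ← sq] at this

lemma qa_eq (n : ℕ) : qa n = ∑ k ∈ Finset.range n, q ^ ((n : ℤ) - 1 - 2 * k) := by
  rw [qa, div_eq_iff hq, Finset.sum_mul]
  have key : ∀ k ∈ Finset.range n, q ^ ((n : ℤ) - 1 - 2 * k) * (q - q⁻¹)
      = (fun k : ℕ => q ^ ((n : ℤ) - 2 * k)) k - (fun k : ℕ => q ^ ((n : ℤ) - 2 * k)) (k + 1) := by
    intro k _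
    simp only [mul_sub]
    rw [← zpow_add_one₀ hq0, ← zpow_sub_one₀ hq0,
      show (n : ℤ) - 1 - 2 * k + 1 = (n : ℤ) - 2 * k by ring,
      show (n : ℤ) - 1 - 2 * k - 1 = (n : ℤ) - 2 * ((k + 1 : ℕ) : ℤ) by push_cast; ring]
  rw [Finset.sum_congr rfl key, Finset.sum_range_sub']
  push_cast
  ring_nf

lemma qa_one : qa 1 = 1 := by
  rw [qa]
  simp only [zpow_one, zpow_neg, zpow_one]
  exact div_self hq

lemma qa_neg_one : qa (-1) = -1 := by
  rw [qa]
  simp only [neg_neg, zpow_one, zpow_neg, zpow_one]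
  rw [← neg_sub, neg_div, div_self hq]

lemma qa_zero : qa 0 = 0 := by simp [qa]

lemma qinv_mem : q⁻¹ ∈ NatLaurent := Subsemiring.subset_closure (Set.mem_singleton _)

lemma c_mem (n : ℕ) (hn : 2 ≤ n) :
    q ^ (2 - 2 * (n : ℤ)) * qa n * qa ((n : ℤ) - 2) ∈ NatLaurent := by
  obtain ⟨m, rfl⟩ : ∃ m, n = m + 2 := ⟨n - 2, by omega⟩
  have h2 : ((m + 2 : ℕ) : ℤ) - 2 = (m : ℕ) := by push_cast; ring
  rw [h2, qa_eq, qa_eq, Finset.mul_sum]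
  refine Subsemiring.sum_mem _ fun j _ => ?_
  rw [Finset.mul_sum, Finset.sum_mul]
  refine Subsemiring.sum_mem _ fun k _ => ?_
  rw [← zpow_add₀ hq0, ← zpow_add₀ hq0]
  rw [show 2 - 2 * ((m + 2 : ℕ) : ℤ) + (((m + 2 : ℕ) : ℤ) - 1 - 2 * k) + ((m : ℤ) - 1 - 2 * j)
      = -((2 + 2 * j + 2 * k : ℕ) : ℤ) by push_cast; ring]
  rw [zpow_neg, zpow_natCast, ← inv_pow]
  exact pow_mem qinv_mem _

lemma coeff_r2 (k : ℕ) : ((Polynomial.X + 1 : Polynomial (RatFunc ℚ))).coeff k ∈ NatLaurent := by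
  match k with
  | 0 => simpa [Polynomial.coeff_one, Polynomial.coeff_X] using one_mem NatLaurent
  | 1 => simpa [Polynomial.coeff_one, Polynomial.coeff_X] using one_mem NatLaurent
  | (k + 2) =>
    rw [Polynomial.coeff_add, Polynomial.coeff_X, Polynomial.coeff_one]
    simpa [Polynomial.coeff_one, Polynomial.coeff_X] using zero_mem NatLaurent

lemma coeff_r3 (k : ℕ) :
    ((Polynomial.X ^ 2 + Polynomial.X : Polynomial (RatFunc ℚ))).coeff k ∈ NatLaurent := by
  match k with
  | 0 => simpa [Polynomial.coeff_one, Polynomial.coeff_X] using zero_mem NatLaurent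
  | 1 => simpa [Polynomial.coeff_one, Polynomial.coeff_X] using one_mem NatLaurent
  | 2 => simpa [Polynomial.coeff_one, Polynomial.coeff_X] using one_mem NatLaurent
  | (k + 3) =>
    rw [Polynomial.coeff_add, Polynomial.coeff_X, Polynomial.coeff_X_pow]
    simpa [Polynomial.coeff_one, Polynomial.coeff_X] using zero_mem NatLaurent

/-- For n ≥ 2, (x-1) divides 𝔭_n(x) and the quotient has coefficients in ℕ[q⁻¹],
where 𝔭_{n+1} = x·𝔭_n + q^{2-2n}[n][n-2]·𝔭_{n-1}. -/
theorem stmt7 (p : ℕ → Polynomial (RatFunc ℚ))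
    (hp0 : p 0 = 1) (hp1 : p 1 = Polynomial.X)
    (hrec : ∀ n : ℕ, 1 ≤ n →
      p (n + 1) = Polynomial.X * p n
        + Polynomial.C (q ^ (2 - 2 * (n : ℤ)) * qa n * qa ((n : ℤ) - 2)) * p (n - 1)) :
    ∀ n : ℕ, 2 ≤ n → ∃ r : Polynomial (RatFunc ℚ),
      p n = (Polynomial.X - 1) * r ∧ ∀ k : ℕ, r.coeff k ∈ NatLaurent := by
  set P : ℕ → Prop := fun n => ∃ r : Polynomial (RatFunc ℚ),
      p n = (Polynomial.X - 1) * r ∧ ∀ k : ℕ, r.coeff k ∈ NatLaurent with hP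
  have hp2 : p 2 = (Polynomial.X - 1) * (Polynomial.X + 1) := by
    have h := hrec 1 le_rfl
    norm_num at h
    rw [h, hp0, hp1, qa_one, qa_neg_one]
    norm_num
    ring
  have base2 : P 2 := ⟨Polynomial.X + 1, hp2, coeff_r2⟩
  have base3 : P 3 := by
    have h := hrec 2 (by norm_num)
    norm_num at h
    refine ⟨Polynomial.X ^ 2 + Polynomial.X, ?_, coeff_r3⟩
    rw [h, hp2, hp1]
    simp [qa_zero]
    ring
  have step : ∀ m : ℕ, P (m + 2) → P (m + 3) → P (m + 4) := by
    intro m ⟨s, hs, hsc⟩ ⟨r, hr, hrc⟩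
    have h := hrec (m + 3) (by omega)
    have hm : (m + 3 : ℕ) - 1 = m + 2 := by omega
    rw [hm, hs, hr] at h
    set c := q ^ (2 - 2 * ((m + 3 : ℕ) : ℤ)) * qa ((m + 3 : ℕ) : ℤ) * qa (((m + 3 : ℕ) : ℤ) - 2)
      with hc
    have hcm : c ∈ NatLaurent := c_mem (m + 3) (by omega)
    refine ⟨Polynomial.X * r + Polynomial.C c * s, by rw [show m + 4 = m + 3 + 1 from rfl, h]; ring,
      fun k => ?_⟩
    rw [Polynomial.coeff_add, Polynomial.coeff_C_mul]
    refine add_mem ?_ (mul_mem hcm (hsc k))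
    match k with
    | 0 => simp [Polynomial.mul_coeff_zero]
    | (k + 1) => rw [Polynomial.coeff_X_mul]; exact hrc k
  have key : ∀ m : ℕ, P (m + 2) ∧ P (m + 3) := by
    intro m
    induction m with
    | zero => exact ⟨base2, base3⟩
    | succ i ih => exact ⟨ih.2, step i ih.1 ih.2⟩
  intro n hn
  obtain ⟨m, rfl⟩ : ∃ m, n = m + 2 := ⟨n - 2, by omega⟩
  exact (key m).1
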